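/- Let t be a positive integer and let 0 ≤ s < t be an integer such that s is not congruent to j(j+1)/2 modulo t for any integer j with 0 ≤ j < 2t. Then for all n ≥ 0, the coefficient of q^{tn+s} in (q;q)_∞^3/(q^t;q^t)_∞^3 is zero. -/

import Mathlib

open PowerSeries

/-- `(q^r; q^a)_∞ = ∏_{k≥0} (1 - q^{r+ak})` as a formal power series (defined
coefficientwise via truncated products; for `r ≥ 1` factors of index `> n` do not
affect the coefficient of `q^n`). -/
noncomputable def qpoch (r a : ℕ) : PowerSeries ℝ :=
  PowerSeries.mk fun n =>
    PowerSeries.coeff (R := ℝ) n (∏ k ∈ Finset.range (n + 1), (1 - PowerSeries.X ^ (r + a * k)))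

/-- `(q^a; q^a)_∞ = ∏_{k≥1} (1 - q^{ak})`. -/
noncomputable def E (a : ℕ) : PowerSeries ℝ := qpoch a a

/-- `c_t^{(m)}(n)`: the coefficient of `q^n` in `(q;q)_∞^m / (q^t;q^t)_∞^m`. -/
noncomputable def borweinC (t m n : ℕ) : ℝ :=
  PowerSeries.coeff (R := ℝ) n ((E 1) ^ m * ((E t) ^ m)⁻¹)


open Polynomial Finset

noncomputable section
namespace BorweinAux

abbrev R := Polynomial ℝ
abbrev q : R := Polynomial.X

/-- triangular number s(s+1)/2 -/
def tri : ℕ → ℕ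
  | 0 => 0
  | s + 1 => tri s + (s + 1)

/-- `tl j = j (j-1)/2`, the "lower" triangular number -/
def tl : ℕ → ℕ
  | 0 => 0
  | s + 1 => tri s

lemma tri_succ (s : ℕ) : tri (s + 1) = tri s + (s + 1) := rfl

lemma tl_succ (j : ℕ) : tl (j + 1) = tl j + j := by
  cases j with
  | zero => rfl
  | succ j => show tri (j+1) = tri j + (j+1); rfl

lemma tri_two' (s : ℕ) : 2 * tri s = s * (s + 1) := by
  induction s with
  | zero => rfl
  | succ s ih =>
    rw [tri_succ, Nat.mul_add, ih]; ring

lemma tl_two (j : ℕ) : 2 * tl j + j = j * j := by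
  induction j with
  | zero => rfl
  | succ j ih => rw [tl_succ, Nat.mul_add, Nat.mul_add]; nlinarith [ih]

lemma le_tri (s : ℕ) : s ≤ tri s := by
  induction s with
  | zero => simp
  | succ s ih => rw [tri_succ]; omega

lemma tri_add (a c : ℕ) : tri (a + c) = tri a + tri c + a * c := by
  induction c with
  | zero => simp [tri]
  | succ c ih =>
    rw [show a + (c+1) = (a+c)+1 by ring, tri_succ, ih, tri_succ]
    ring

lemma tri_eq (j : ℕ) : tri j = j * (j + 1) / 2 := by
  have := tri_two' j
  omega

def e (M : ℕ) : R := ∏ k ∈ Finset.range M, (1 - q ^ (k + 1))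

lemma e_zero : e 0 = 1 := by simp [e]

lemma e_succ (M : ℕ) : e (M + 1) = e M * (1 - q ^ (M + 1)) := by
  simp [e, Finset.prod_range_succ]

lemma e_ne_zero (M : ℕ) : e M ≠ 0 := by
  refine Finset.prod_ne_zero_iff.mpr fun k _ => ?_
  intro hk
  have := congrArg (fun p : R => Polynomial.coeff p 0) hk
  simp at this

def gb : ℕ → ℕ → R
  | 0, 0 => 1
  | 0, _ + 1 => 0
  | _ + 1, 0 => 1
  | m + 1, j + 1 => gb m (j + 1) + q ^ (m - j) * gb m (j + 1 - 1)

lemma gb_zero_right (m : ℕ) : gb m 0 = 1 := by cases m <;> rfl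

lemma gb_succ (m j : ℕ) : gb (m+1) (j+1) = gb m (j+1) + q ^ (m - j) * gb m j := by
  show _ = gb m (j+1) + q ^ (m - j) * gb m (j + 1 - 1)
  rfl

lemma gb_eq_zero {m j : ℕ} (h : m < j) : gb m j = 0 := by
  induction m generalizing j with
  | zero => match j, h with | j+1, _ => rfl
  | succ m ih =>
    match j, h with
    | j+1, h =>
      rw [gb_succ, ih (by omega), ih (by omega), mul_zero, add_zero]

lemma gb_mul (m : ℕ) : ∀ j ≤ m, gb m j * (e j * e (m - j)) = e m := by
  induction m with
  | zero =>
    intro j hj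
    have : j = 0 := by omega
    subst this; simp [gb_zero_right, e_zero]
  | succ m ih =>
    intro j hj
    match j with
    | 0 => simp [gb_zero_right, e_zero]
    | j + 1 =>
      rcases Nat.lt_or_ge j m with hjm | hjm
      · -- j + 1 ≤ m
        have IH1 := ih (j+1) hjm
        have IH2 := ih j (by omega)
        rw [gb_succ]
        rw [show m + 1 - (j+1) = (m - (j+1)) + 1 by omega, e_succ (m - (j+1)),
          show m - (j+1) + 1 = m - j by omega] at *
        rw [e_succ j] at *
        rw [show e (m - j) = e (m - (j+1)) * (1 - q ^ (m - j)) by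
              rw [show m - j = (m - (j+1)) + 1 by omega, e_succ,
                show m - (j+1) + 1 = m - j by omega]] at IH2
        rw [e_succ m]
        have hq : q ^ (m + 1) = q ^ (j + 1) * q ^ (m - j) := by
          rw [← pow_add]; congr 1; omega
        rw [hq]
        linear_combination (1 - q ^ (m - j)) * IH1 + q ^ (m - j) * (1 - q ^ (j+1)) * IH2
      · -- j = m
        have hj' : j = m := by omega
        subst hj'
        rw [gb_succ, gb_eq_zero (by omega), zero_add]
        have h2 := ih j le_rfl
        simp only [Nat.sub_self, e_zero, mul_one] at h2
        have h1 : gb j j = 1 := mul_right_cancel₀ (e_ne_zero j) (by rw [h2, one_mul])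
        simp [h1, e_zero]

lemma gb_symm {m j : ℕ} (h : j ≤ m) : gb m j = gb m (m - j) := by
  have h1 := gb_mul m j h
  have h2 := gb_mul m (m - j) (by omega)
  rw [show m - (m - j) = j by omega] at h2
  have : gb m j * (e j * e (m - j)) = gb m (m-j) * (e j * e (m - j)) := by
    rw [h1, ← h2]; ring
  exact mul_right_cancel₀ (mul_ne_zero (e_ne_zero _) (e_ne_zero _)) this


lemma e_def (M : ℕ) : e M = ∏ k ∈ Finset.range M, (1 - q ^ (k + 1)) := rfl

-- ### new material

lemma tl_zero : tl 0 = 0 := rfl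
lemma tri_zero : tri 0 = 0 := rfl

lemma tl_sum (M : ℕ) : ∑ k ∈ range M, k = tl M := by
  induction M with
  | zero => rfl
  | succ M ih => rw [Finset.sum_range_succ, ih, tl_succ]

lemma exp_symm {M j : ℕ} (hj : j ≤ 2*M+1) :
    tl j + M*(2*M+1-j) = tl (2*M+1-j) + M*j := by
  have h1 := tl_two j
  have h2 := tl_two (2*M+1-j)
  refine Nat.eq_of_mul_eq_mul_left (show 0 < 2 by norm_num) ?_
  zify [hj] at h1 h2 ⊢
  linear_combination h1 - h2

lemma exp_main {M s : ℕ} (hs : s ≤ M) :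
    tl (M+1+s) + M*(M-s) = (M + (tl M + M*M)) + tri s := by
  have h1 := tl_two (M+1+s)
  have h2 := tl_two M
  have h3 := tri_two' s
  refine Nat.eq_of_mul_eq_mul_left (show 0 < 2 by norm_num) ?_
  zify [hs] at h1 h2 h3 ⊢
  linear_combination h1 - h2 - h3

lemma coeff_csum (N : ℕ) (F : ℕ → R) (n : ℕ) :
    (∑ j ∈ range N, Polynomial.C (F j) * Polynomial.X ^ j).coeff n = if n < N then F n else 0 := by
  rw [Polynomial.finset_sum_coeff]
  simp only [Polynomial.coeff_C_mul, Polynomial.coeff_X_pow, mul_ite, mul_one, mul_zero]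
  rw [Finset.sum_ite_eq (range N) n F]
  simp [Finset.mem_range]

/-- Gauss-type expansion of the `q`-shifted product. -/
lemma gauss (m : ℕ) (c : R) :
    ∏ k ∈ range m, (Polynomial.C c - Polynomial.C (q^k) * Polynomial.X) =
      ∑ j ∈ range (m+1), Polynomial.C ((-1)^j * q^(tl j) * c^(m-j) * gb m j) * Polynomial.X^j := by
  induction m with
  | zero => simp [tl, gb_zero_right]
  | succ m ih =>
    rw [Finset.prod_range_succ, ih]
    refine Polynomial.ext fun n => ?_
    rw [coeff_csum, mul_sub, Polynomial.coeff_sub, Polynomial.coeff_mul_C, coeff_csum]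
    have hX : (∑ j ∈ range (m+1), Polynomial.C ((-1)^j * q^(tl j) * c^(m-j) * gb m j) * Polynomial.X^j) * (Polynomial.C (q^m) * Polynomial.X)
        = ((∑ j ∈ range (m+1), Polynomial.C ((-1)^j * q^(tl j) * c^(m-j) * gb m j) * Polynomial.X^j) * Polynomial.C (q^m)) * Polynomial.X ^ 1 := by
      ring
    rw [hX, Polynomial.coeff_mul_X_pow', Polynomial.coeff_mul_C, coeff_csum]
    rcases n with _ | n
    · -- n = 0
      rw [if_pos (show 0 < m+1 by omega), if_neg (show ¬ (1 ≤ 0) by omega),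
        if_pos (show 0 < m+2 by omega)]
      rw [gb_zero_right, gb_zero_right]
      simp only [pow_zero, one_mul, Nat.sub_zero, mul_one, sub_zero]
      rw [mul_assoc, ← pow_succ]
    · simp only [Nat.add_sub_cancel]
      rcases Nat.lt_or_ge (n+1) (m+1) with hlt | hge
      · -- n+1 ≤ m
        rw [if_pos hlt, if_pos (show 1 ≤ n+1 by omega), if_pos (show n < m+1 by omega),
          if_pos (show n+1 < m+2 by omega)]
        rw [gb_succ, tl_succ, show m + 1 - (n+1) = m - n by omega]
        have e2 : c ^ (m - (n+1)) * c = c ^ (m - n) := by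
          rw [← pow_succ]; congr 1; omega
        have e3 : (q:R) ^ (tl n + n) * q ^ (m - n) = q ^ (tl n) * q ^ m := by
          rw [← pow_add, ← pow_add]; congr 1; omega
        linear_combination ((-1:R)^(n+1) * q^(tl n + n) * gb m (n+1)) * e2
          + ((-1:R)^n * c^(m-n) * gb m n) * e3
      · rcases Nat.eq_or_lt_of_le hge with heq | hgt
        · -- n = m
          obtain rfl : n = m := by omega
          rw [if_neg (show ¬ (n+1 < n+1) by omega), if_pos (show 1 ≤ n+1 by omega),
            if_pos (show n < n+1 by omega), if_pos (show n+1 < n+2 by omega)]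
          rw [gb_succ, gb_eq_zero (Nat.lt_succ_self n), tl_succ, Nat.sub_self, Nat.sub_self]
          simp only [pow_zero, one_mul, zero_add, mul_one]
          rw [pow_add]
          ring
        · -- n + 1 > m + 1
          rw [if_neg (show ¬ (n+1 < m+1) by omega), if_pos (show 1 ≤ n+1 by omega),
            if_neg (show ¬ (n < m+1) by omega), if_neg (show ¬ (n+1 < m+2) by omega)]
          simp

def Phi (M : ℕ) : Polynomial R := ∏ k ∈ range (2*M+1), (Polynomial.C (q^M) - Polynomial.C (q^k) * Polynomial.X)

def phi (M j : ℕ) : R := (-1)^j * q^(tl j + M*(2*M+1-j)) * gb (2*M+1) j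

lemma Phi_eq_sum (M : ℕ) : Phi M = ∑ j ∈ range (2*M+2), Polynomial.C (phi M j) * Polynomial.X^j := by
  rw [Phi, gauss]
  refine Finset.sum_congr rfl fun j _ => ?_
  have : phi M j = (-1)^j * q^(tl j) * (q^M)^(2*M+1-j) * gb (2*M+1) j := by
    rw [phi, ← pow_mul, pow_add]; ring
  rw [this]

lemma sum_phi (M : ℕ) : ∑ j ∈ range (2*M+2), phi M j = 0 := by
  have h0 : Polynomial.eval (1 : R) (Phi M) = 0 := by
    rw [Phi, Polynomial.eval_prod]
    refine Finset.prod_eq_zero (Finset.mem_range.mpr (by omega : M < 2*M+1)) ?_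
    simp
  rw [Phi_eq_sum, Polynomial.eval_finset_sum] at h0
  simpa using h0

lemma eval_derivative_prod {ι : Type*} [DecidableEq ι] (s : Finset ι) (f : ι → Polynomial R)
    (x : R) :
    Polynomial.eval x (Polynomial.derivative (∏ i ∈ s, f i)) =
      ∑ i ∈ s, (∏ j ∈ s.erase i, Polynomial.eval x (f j)) *
        Polynomial.eval x (Polynomial.derivative (f i)) := by
  induction s using Finset.induction_on with
  | empty => simp
  | @insert a s ha ih =>
    rw [Finset.prod_insert ha, Polynomial.derivative_mul, Polynomial.eval_add,
      Polynomial.eval_mul, Polynomial.eval_mul, ih, Finset.sum_insert ha,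
      Finset.erase_insert ha]
    have hterm : ∀ i ∈ s, (∏ j ∈ (insert a s).erase i, Polynomial.eval x (f j)) *
        Polynomial.eval x (Polynomial.derivative (f i)) =
        Polynomial.eval x (f a) * ((∏ j ∈ s.erase i, Polynomial.eval x (f j)) *
          Polynomial.eval x (Polynomial.derivative (f i))) := by
      intro i hi
      rw [Finset.erase_insert_of_ne (by rintro rfl; exact ha hi),
        Finset.prod_insert (fun hmem => ha (Finset.mem_of_mem_erase hmem))]
      ring
    rw [Finset.sum_congr rfl hterm, ← Finset.mul_sum, Polynomial.eval_prod]
    ring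

lemma sum_j_phi (M : ℕ) :
    ∑ j ∈ range (2*M+2), (j:R) * phi M j =
      (-1)^(M+1) * q^(M + (tl M + M*M)) * (e M * e M) := by
  have hsum : Polynomial.eval (1:R) (Polynomial.derivative (Phi M)) =
      ∑ j ∈ range (2*M+2), (j:R) * phi M j := by
    rw [Phi_eq_sum, Polynomial.derivative_sum, Polynomial.eval_finset_sum]
    refine Finset.sum_congr rfl fun j _ => ?_
    rw [Polynomial.derivative_C_mul, Polynomial.derivative_X_pow]
    simp [mul_comm]
  have hprod : Polynomial.eval (1:R) (Polynomial.derivative (Phi M)) =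
      (∏ k ∈ (range (2*M+1)).erase M, ((q:R)^M - q^k)) * (-(q^M)) := by
    rw [Phi, eval_derivative_prod]
    rw [Finset.sum_eq_single M]
    · congr 1
      · refine Finset.prod_congr rfl fun k _ => by simp
      · simp
    · intro k hk hkM
      have : (∏ j ∈ ((range (2*M+1)).erase k),
          Polynomial.eval (1:R) (Polynomial.C (q^M) - Polynomial.C (q^j) * Polynomial.X)) = 0 := by
        refine Finset.prod_eq_zero (Finset.mem_erase.mpr
          ⟨Ne.symm hkM, Finset.mem_range.mpr (by omega)⟩) ?_
        simp
      rw [this, zero_mul]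
    · intro hM
      exact absurd (Finset.mem_range.mpr (by omega : M < 2*M+1)) hM
  have hPsi : (∏ k ∈ (range (2*M+1)).erase M, ((q:R)^M - q^k)) =
      (-1)^M * q^(tl M + M*M) * (e M * e M) := by
    have hset : (range (2*M+1)).erase M = range M ∪ Ico (M+1) (2*M+1) := by
      ext x
      simp only [Finset.mem_erase, Finset.mem_range, Finset.mem_union, Finset.mem_Ico]
      omega
    rw [hset, Finset.prod_union (by
      rw [Finset.disjoint_left]
      intro a ha hb
      simp only [Finset.mem_range] at ha
      simp only [Finset.mem_Ico] at hb
      omega)]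
    have hlow : (∏ k ∈ range M, ((q:R)^M - q^k)) = (-1)^M * q^(tl M) * e M := by
      have hfac : ∀ k ∈ range M, ((q:R)^M - q^k) = ((-1) * q^k) * (1 - q^(M-k)) := by
        intro k hk
        simp only [Finset.mem_range] at hk
        have hqq : (q:R)^k * q^(M-k) = q^M := by rw [← pow_add]; congr 1; omega
        linear_combination -hqq
      rw [Finset.prod_congr rfl hfac, Finset.prod_mul_distrib, Finset.prod_mul_distrib,
        Finset.prod_const, Finset.prod_pow_eq_pow_sum, tl_sum]
      have hrefl : (∏ k ∈ range M, (1 - (q:R)^(M-k))) = e M := by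
        rw [e_def, ← Finset.prod_range_reflect (fun k => 1 - (q:R)^(k+1)) M]
        refine Finset.prod_congr rfl fun k hk => ?_
        simp only [Finset.mem_range] at hk
        congr 2
        omega
      rw [hrefl, Finset.card_range]
    have hhigh : (∏ k ∈ Ico (M+1) (2*M+1), ((q:R)^M - q^k)) = q^(M*M) * e M := by
      rw [Finset.prod_Ico_eq_prod_range]
      have : ∀ k ∈ range (2*M+1-(M+1)), ((q:R)^M - q^(M+1+k)) = q^M * (1 - q^(k+1)) := by
        intro k hk
        have : (q:R)^M * q^(k+1) = q^(M+1+k) := by rw [← pow_add]; congr 1; omega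
        linear_combination -this
      rw [Finset.prod_congr rfl this, Finset.prod_mul_distrib, Finset.prod_const,
        show 2*M+1-(M+1) = M by omega, ← pow_mul, e_def, Finset.card_range]
    rw [hlow, hhigh]
    ring
  rw [hsum] at hprod
  rw [hprod, hPsi, pow_succ, pow_add]
  ring

/-- antisymmetry of the coefficients -/
lemma phi_antisymm {M j : ℕ} (hj : j ≤ 2*M+1) : phi M (2*M+1-j) = - phi M j := by
  unfold phi
  rw [show 2*M+1-(2*M+1-j) = j by omega, exp_symm hj, ← gb_symm hj]
  have hsign : (-1:R)^(2*M+1-j) = -(-1:R)^j := by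
    have h1 : (-1:R)^(2*M+1-j) * (-1:R)^j = (-1:R)^(2*M+1) := by
      rw [← pow_add]; congr 1; omega
    have h2 : ((-1:R)^j) * ((-1:R)^j) = 1 := by
      rw [← pow_add]
      exact Even.neg_one_pow ⟨j, by omega⟩
    have h3 : (-1:R)^(2*M+1) = -1 := Odd.neg_one_pow ⟨M, by omega⟩
    calc (-1:R)^(2*M+1-j) = (-1:R)^(2*M+1-j) * ((-1:R)^j * (-1:R)^j) := by rw [h2, mul_one]
      _ = ((-1:R)^(2*M+1-j) * (-1:R)^j) * (-1:R)^j := by ring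
      _ = -(-1:R)^j := by rw [h1, h3]; ring
  rw [hsign]
  ring

/-- The key identity: Jacobi-type expansion of `e M ^ 2`. -/
lemma key (M : ℕ) : e M * e M =
    ∑ s ∈ range (M+1), (-1:R)^s * (2*(s:R)+1) * q^(tri s) * gb (2*M+1) (M+1+s) := by
  have hA := sum_phi M
  have hB := sum_j_phi M
  set g : ℕ → R := fun j => (2*(j:R) - (2*(M:R)+1)) * phi M j with hg
  have hgsym : ∀ j ≤ 2*M+1, g (2*M+1-j) = g j := by
    intro j hj
    rw [hg]
    simp only
    rw [phi_antisymm hj]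
    push_cast [hj]
    ring
  have hsplit : ∑ j ∈ range (2*M+2), g j
      = ∑ j ∈ range (M+1), g j + ∑ j ∈ Ico (M+1) (2*M+2), g j := by
    rw [Finset.sum_range_add_sum_Ico _ (by omega)]
  have hico : ∑ j ∈ Ico (M+1) (2*M+2), g j = ∑ s ∈ range (M+1), g (M+1+s) := by
    rw [Finset.sum_Ico_eq_sum_range, show 2*M+2-(M+1) = M+1 by omega]
  have hlowfold : ∑ j ∈ range (M+1), g j = ∑ s ∈ range (M+1), g (M+1+s) := by
    have hrefl := Finset.sum_range_reflect (fun j => g (M+1+j)) (M+1)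
    rw [← hrefl]
    refine Finset.sum_congr rfl fun j hj => ?_
    simp only [Finset.mem_range] at hj
    rw [show M+1+(M+1-1-j) = 2*M+1-j by omega, hgsym j (by omega)]
  have h2 : ∑ j ∈ range (2*M+2), g j = 2 * ∑ s ∈ range (M+1), g (M+1+s) := by
    rw [hsplit, hico, hlowfold]; ring
  have hgB : ∑ j ∈ range (2*M+2), g j = 2 * ∑ j ∈ range (2*M+2), (j:R) * phi M j := by
    have hc : ∀ j ∈ range (2*M+2), g j = 2 * ((j:R) * phi M j) - (2*(M:R)+1) * phi M j :=
      fun j _ => by rw [hg]; ring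
    rw [Finset.sum_congr rfl hc, Finset.sum_sub_distrib, ← Finset.mul_sum, ← Finset.mul_sum,
      hA, mul_zero, sub_zero]
  have hmain : ∑ s ∈ range (M+1), g (M+1+s) =
      (-1)^(M+1) * q^(M + (tl M + M*M)) * (e M * e M) := by
    refine mul_left_cancel₀ (show (2:R) ≠ 0 by norm_num) ?_
    rw [← h2, hgB, hB]
  have hterm : ∀ s ∈ range (M+1), g (M+1+s) =
      ((-1:R)^(M+1) * q^(M + (tl M + M*M))) *
        ((-1:R)^s * (2*(s:R)+1) * q^(tri s) * gb (2*M+1) (M+1+s)) := by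
    intro s hs
    simp only [Finset.mem_range] at hs
    rw [hg]
    simp only
    unfold phi
    rw [show 2*M+1-(M+1+s) = M - s by omega, exp_main (by omega : s ≤ M)]
    rw [pow_add ((q:R)) (M + (tl M + M*M)) (tri s), pow_add ((-1):R) (M+1) s]
    push_cast
    ring
  have hfin : ((-1:R)^(M+1) * q^(M + (tl M + M*M))) * (e M * e M) =
      ((-1:R)^(M+1) * q^(M + (tl M + M*M))) *
        (∑ s ∈ range (M+1), (-1:R)^s * (2*(s:R)+1) * q^(tri s) * gb (2*M+1) (M+1+s)) := by
    rw [← hmain, Finset.sum_congr rfl hterm, ← Finset.mul_sum]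
  exact mul_left_cancel₀
    (mul_ne_zero (pow_ne_zero _ (by norm_num : (-1:R) ≠ 0))
      (pow_ne_zero _ Polynomial.X_ne_zero)) hfin

-- ## coefficient extraction on the polynomial side

lemma e_split {a b : ℕ} (h : a ≤ b) :
    e b = e a * ∏ k ∈ Ico a b, (1 - q ^ (k+1)) := by
  rw [e_def, e_def, Finset.prod_range_mul_prod_Ico _ h]

lemma eb_eq {M s : ℕ} (hs : s ≤ M) :
    e M * gb (2*M+1) (M+1+s) =
      ∏ k ∈ Ico (M-s) M ∪ Ico (M+1+s) (2*M+1), (1 - q ^ (k+1)) := by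
  have hgb := gb_mul (2*M+1) (M+1+s) (by omega)
  rw [show 2*M+1-(M+1+s) = M - s by omega] at hgb
  have hdisj : Disjoint (Ico (M-s) M) (Ico (M+1+s) (2*M+1)) := by
    rw [Finset.disjoint_left]
    intro a ha hb
    simp only [Finset.mem_Ico] at ha hb
    omega
  rw [Finset.prod_union hdisj]
  refine mul_right_cancel₀
    (mul_ne_zero (e_ne_zero (M+1+s)) (e_ne_zero (M-s))) ?_
  calc e M * gb (2*M+1) (M+1+s) * (e (M+1+s) * e (M-s))
      = e M * (gb (2*M+1) (M+1+s) * (e (M+1+s) * e (M-s))) := by ring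
    _ = e M * e (2*M+1) := by rw [hgb]
    _ = (e (M-s) * ∏ k ∈ Ico (M-s) M, (1 - q^(k+1)))
          * (e (M+1+s) * ∏ k ∈ Ico (M+1+s) (2*M+1), (1 - q^(k+1))) := by
        rw [← e_split (show M - s ≤ M by omega), ← e_split (show M+1+s ≤ 2*M+1 by omega)]
    _ = (∏ k ∈ Ico (M-s) M, (1 - q^(k+1))) * (∏ k ∈ Ico (M+1+s) (2*M+1), (1 - q^(k+1)))
          * (e (M+1+s) * e (M-s)) := by ring

lemma coeff_prod_tail (F : Finset ℕ) (D : ℕ) (hD : ∀ k ∈ F, D ≤ k + 1) :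
    ∀ n < D, (∏ k ∈ F, (1 - q ^ (k+1))).coeff n = if n = 0 then 1 else 0 := by
  induction F using Finset.induction_on with
  | empty => intro n hn; simp [Polynomial.coeff_one]
  | @insert a Fs ha ih =>
    intro n hn
    rw [Finset.prod_insert ha, sub_mul, one_mul, Polynomial.coeff_sub]
    have h1 : ((q:R)^(a+1) * ∏ k ∈ Fs, (1 - q^(k+1))).coeff n = 0 := by
      rw [Polynomial.coeff_X_pow_mul']
      rw [if_neg]
      have := hD a (Finset.mem_insert_self a Fs)
      omega
    rw [h1, sub_zero]
    exact ih (fun k hk => hD k (Finset.mem_insert_of_mem hk)) n hn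

lemma coeff_e_cube {M N : ℕ} (hNM : N ≤ M) (hN : ∀ s, N ≠ tri s) :
    (e M * (e M * e M)).coeff N = 0 := by
  rw [key M, Finset.mul_sum, Polynomial.finset_sum_coeff]
  refine Finset.sum_eq_zero fun s hs => ?_
  simp only [Finset.mem_range] at hs
  have hre : e M * ((-1:R)^s * (2*(s:R)+1) * q^(tri s) * gb (2*M+1) (M+1+s))
      = Polynomial.C ((-1:ℝ)^s * (2*(s:ℝ)+1)) *
        ((q:R)^(tri s) * (e M * gb (2*M+1) (M+1+s))) := by
    have hC : (Polynomial.C ((-1:ℝ)^s * (2*(s:ℝ)+1)) : R) = (-1:R)^s * (2*(s:R)+1) := by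
      simp only [map_mul, map_pow, map_add, map_one, map_neg, map_ofNat]
      norm_num
    rw [hC]; ring
  rw [hre, Polynomial.coeff_C_mul, Polynomial.coeff_X_pow_mul']
  rcases le_or_gt (tri s) N with hle | hlt
  · rw [if_pos hle, eb_eq (show s ≤ M by omega)]
    rw [coeff_prod_tail _ (M - s + 1) (by
        intro k hk
        simp only [Finset.mem_union, Finset.mem_Ico] at hk
        omega) _ (by have := le_tri s; omega)]
    rw [if_neg (by have := hN s; omega)]
    simp
  · rw [if_neg (by omega)]
    simp

-- ## power series side

open PowerSeries

lemma coe_e (M : ℕ) : ((e M : R) : PowerSeries ℝ)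
    = ∏ k ∈ range M, (1 - PowerSeries.X ^ (k+1)) := by
  rw [← Polynomial.coeToPowerSeries.ringHom_apply, e_def, map_prod]
  refine Finset.prod_congr rfl fun k _ => ?_
  rw [map_sub, map_one, map_pow, Polynomial.coeToPowerSeries.ringHom_apply, Polynomial.coe_X]

lemma stable {r a : ℕ} (hr : 1 ≤ r) (ha : 1 ≤ a) {n m : ℕ} (hm : n ≤ m) :
    PowerSeries.coeff (R := ℝ) n (∏ k ∈ range m, (1 - PowerSeries.X ^ (r + a*k)))
      = PowerSeries.coeff (R := ℝ) n (∏ k ∈ range n, (1 - PowerSeries.X ^ (r + a*k))) := by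
  induction m, hm using Nat.le_induction with
  | base => rfl
  | succ m hm ih =>
    rw [Finset.prod_range_succ, mul_sub, mul_one, map_sub, PowerSeries.coeff_mul_X_pow',
      if_neg (by nlinarith), sub_zero, ih]


lemma coeff_E1_trunc (i m : ℕ) (hm : i ≤ m) :
    PowerSeries.coeff (R := ℝ) i (E 1) =
      PowerSeries.coeff (R := ℝ) i (∏ k ∈ Finset.range m, (1 - PowerSeries.X ^ (1 + 1*k))) := by
  rw [E, qpoch, PowerSeries.coeff_mk, stable (le_refl 1) (le_refl 1) (by omega : i ≤ i + 1),
    stable (le_refl 1) (le_refl 1) hm]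

lemma agree_E1 {M i : ℕ} (hi : i ≤ M) :
    PowerSeries.coeff (R := ℝ) i (E 1) = PowerSeries.coeff (R := ℝ) i ((e M : R) : PowerSeries ℝ) := by
  rw [coe_e, coeff_E1_trunc i M hi]
  congr 1
  refine Finset.prod_congr rfl fun k _ => by rw [show 1 + 1*k = k + 1 by omega]

lemma coeff_mul_congr {f f' g g' : PowerSeries ℝ} {n : ℕ}
    (hf : ∀ i ≤ n, PowerSeries.coeff (R := ℝ) i f = PowerSeries.coeff (R := ℝ) i f')
    (hg : ∀ i ≤ n, PowerSeries.coeff (R := ℝ) i g = PowerSeries.coeff (R := ℝ) i g') :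
    PowerSeries.coeff (R := ℝ) n (f * g) = PowerSeries.coeff (R := ℝ) n (f' * g') := by
  rw [PowerSeries.coeff_mul, PowerSeries.coeff_mul]
  refine Finset.sum_congr rfl fun p hp => ?_
  rw [Finset.HasAntidiagonal.mem_antidiagonal] at hp
  rw [hf p.1 (by omega), hg p.2 (by omega)]

lemma coeff_E1_cube {N : ℕ} (hN : ∀ s, N ≠ tri s) :
    PowerSeries.coeff (R := ℝ) N ((E 1)^3) = 0 := by
  have hagree : ∀ i ≤ N, PowerSeries.coeff (R := ℝ) i (E 1)
      = PowerSeries.coeff (R := ℝ) i ((e N : R) : PowerSeries ℝ) := fun i hi => agree_E1 hi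
  have hsq : ∀ i ≤ N, PowerSeries.coeff (R := ℝ) i (E 1 * E 1)
      = PowerSeries.coeff (R := ℝ) i (((e N : R) : PowerSeries ℝ) * ((e N : R) : PowerSeries ℝ)) :=
    fun i hi => coeff_mul_congr (fun j hj => hagree j (le_trans hj hi))
      (fun j hj => hagree j (le_trans hj hi))
  have hcube : PowerSeries.coeff (R := ℝ) N ((E 1)^3)
      = PowerSeries.coeff (R := ℝ) N (((e N : R) : PowerSeries ℝ) *
          (((e N : R) : PowerSeries ℝ) * ((e N : R) : PowerSeries ℝ))) := by
    rw [show (E 1 : PowerSeries ℝ)^3 = E 1 * (E 1 * E 1) by ring]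
    exact coeff_mul_congr hagree hsq
  rw [hcube, ← Polynomial.coe_mul, ← Polynomial.coe_mul, Polynomial.coeff_coe]
  exact coeff_e_cube (le_refl N) hN

def SupT (t : ℕ) (f : PowerSeries ℝ) : Prop :=
  ∀ n : ℕ, ¬ (t ∣ n) → PowerSeries.coeff (R := ℝ) n f = 0

lemma SupT.mul {t : ℕ} {f g : PowerSeries ℝ} (hf : SupT t f) (hg : SupT t g) :
    SupT t (f * g) := by
  intro n hn
  rw [PowerSeries.coeff_mul]
  refine Finset.sum_eq_zero fun p hp => ?_
  rw [Finset.HasAntidiagonal.mem_antidiagonal] at hp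
  by_cases h1 : t ∣ p.1
  · have h2 : ¬ t ∣ p.2 := fun h2 => hn (hp ▸ dvd_add h1 h2)
    rw [hg p.2 h2, mul_zero]
  · rw [hf p.1 h1, zero_mul]

lemma supT_one (t : ℕ) (ht : 0 < t) : SupT t 1 := by
  intro n hn
  have : n ≠ 0 := fun h => hn (h ▸ dvd_zero t)
  rw [PowerSeries.coeff_one, if_neg this]

lemma supT_factor (t : ℕ) (ht : 0 < t) (k : ℕ) :
    SupT t (1 - PowerSeries.X ^ (t + t*k)) := by
  intro n hn
  have h0 : n ≠ 0 := fun h => hn (h ▸ dvd_zero t)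
  rw [map_sub, PowerSeries.coeff_one, if_neg h0, PowerSeries.coeff_X_pow, if_neg, zero_sub,
    neg_zero]
  intro hEq
  exact hn (hEq ▸ ⟨1 + k, by ring⟩)

lemma supT_prod (t : ℕ) (ht : 0 < t) (m : ℕ) (f : ℕ → PowerSeries ℝ)
    (h : ∀ k, SupT t (f k)) : SupT t (∏ k ∈ Finset.range m, f k) := by
  induction m with
  | zero => simpa using supT_one t ht
  | succ m ih =>
    rw [Finset.prod_range_succ]
    exact ih.mul (h m)

lemma supT_Et (t : ℕ) (ht : 0 < t) : SupT t (E t) := by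
  intro n hn
  rw [E, qpoch, PowerSeries.coeff_mk]
  exact supT_prod t ht (n+1) _ (fun k => supT_factor t ht k) n hn

lemma constCoeff_Et (t : ℕ) (ht : 0 < t) : PowerSeries.constantCoeff (R := ℝ) (E t) = 1 := by
  rw [← PowerSeries.coeff_zero_eq_constantCoeff_apply, E, qpoch, PowerSeries.coeff_mk,
    PowerSeries.coeff_zero_eq_constantCoeff_apply, map_prod]
  refine Finset.prod_eq_one fun k _ => ?_
  rw [map_sub, map_one, map_pow, PowerSeries.constantCoeff_X, zero_pow (by omega), sub_zero]

lemma supT_inv {t : ℕ} (ht : 0 < t) {f : PowerSeries ℝ} (hc : PowerSeries.constantCoeff (R := ℝ) f = 1)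
    (hf : SupT t f) : SupT t f⁻¹ := by
  intro n
  induction n using Nat.strong_induction_on with
  | _ n ih =>
    intro hn
    have hn0 : n ≠ 0 := fun h => hn (h ▸ dvd_zero t)
    rw [PowerSeries.coeff_inv, if_neg hn0, hc]
    have hz : ∑ p ∈ Finset.HasAntidiagonal.antidiagonal n,
        (if p.2 < n then PowerSeries.coeff (R := ℝ) p.1 f * PowerSeries.coeff (R := ℝ) p.2 f⁻¹ else 0) = 0 := by
      refine Finset.sum_eq_zero fun p hp => ?_
      rw [Finset.HasAntidiagonal.mem_antidiagonal] at hp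
      by_cases hp2 : p.2 < n
      · rw [if_pos hp2]
        by_cases hd2 : t ∣ p.2
        · have hd1 : ¬ t ∣ p.1 := by
            intro hd1
            exact hn (hp ▸ dvd_add hd1 hd2)
          rw [hf p.1 hd1, zero_mul]
        · rw [ih p.2 hp2 hd2, mul_zero]
      · rw [if_neg hp2]
    rw [hz, mul_zero]

end BorweinAux

end

open BorweinAux

theorem stmt4 (t : ℕ) (ht : 0 < t) (s : ℕ) (hs : s < t)
    (h : ∀ j : ℕ, j < 2 * t → ¬ (s ≡ j * (j + 1) / 2 [MOD t])) (n : ℕ) :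
    borweinC t 3 (t * n + s) = 0 := by
  have hEt := supT_Et t ht
  have h3 : SupT t ((E t)^3) := by
    rw [show (E t : PowerSeries ℝ)^3 = E t * (E t * E t) by ring]
    exact hEt.mul (hEt.mul hEt)
  have hconst : PowerSeries.constantCoeff (R := ℝ) ((E t)^3) = 1 := by
    rw [map_pow, constCoeff_Et t ht, one_pow]
  have hinv : SupT t (((E t)^3)⁻¹) := supT_inv ht hconst h3
  rw [borweinC, PowerSeries.coeff_mul]
  refine Finset.sum_eq_zero fun p hp => ?_
  rw [Finset.HasAntidiagonal.mem_antidiagonal] at hp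
  by_cases hdvd : t ∣ p.2
  · have hNtri : ∀ s0, p.1 ≠ tri s0 := by
      intro s0 heq
      obtain ⟨u, hu⟩ := hdvd
      set j0 := s0 % (2*t) with hj0
      have hj0lt : j0 < 2*t := Nat.mod_lt _ (by omega)
      have hdecomp : s0 = 2*t*(s0/(2*t)) + j0 := by
        rw [hj0]
        exact (Nat.div_add_mod s0 (2*t)).symm
      set k := s0 / (2*t) with hk
      have h2t : tri (2*t*k) = t * (k*(2*t*k+1)) := by
        refine Nat.eq_of_mul_eq_mul_left (show 0 < 2 by norm_num) ?_
        rw [tri_two']; ring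
      have htri : tri s0 = tri j0 + t*(k*(2*t*k+1) + 2*k*j0) := by
        conv_lhs => rw [hdecomp]
        rw [tri_add, h2t]; ring
      have hmod : s % t = tri j0 % t := by
        calc s % t = (s + t*n) % t := (Nat.add_mul_mod_self_left s t n).symm
          _ = (p.1 + t*u) % t := by congr 1; omega
          _ = p.1 % t := Nat.add_mul_mod_self_left p.1 t u
          _ = (tri j0 + t*(k*(2*t*k+1) + 2*k*j0)) % t := by rw [heq, htri]
          _ = tri j0 % t := Nat.add_mul_mod_self_left _ t _
      exact h j0 hj0lt (by rw [show j0*(j0+1)/2 = tri j0 from (tri_eq j0).symm]; exact hmod)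
    rw [coeff_E1_cube hNtri, zero_mul]
  · rw [hinv p.2 hdvd, mul_zero]
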